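/- Let γ ≥ 1 and h ∈ (0,1], let 𝒫 be the projection operator, and let ζ : Ω → ℝ^d be a random variable on a probability space (Ω, F, ℙ) with E[‖ζ‖^{8γ+2}] < ∞. Then there is a constant C, independent of ζ, h, d and γ (one may take C = 1), such that E[‖ζ − 𝒫(ζ)‖²] ≤ C h² E[‖ζ‖^{8γ+2}]. -/

import Mathlib

open MeasureTheory ProbabilityTheory
open scoped ProbabilityTheory

/-- The projection operator `𝒫(x) = min {1, h^{-1/(2γ)} ‖x‖⁻¹} • x`
(with `𝒫(0) = 0`, since in `ℝ` we have `0⁻¹ = 0`). -/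
noncomputable def proj {d : ℕ} (γ h : ℝ) (x : EuclideanSpace ℝ (Fin d)) :
    EuclideanSpace ℝ (Fin d) :=
  min 1 (h ^ (-(1 : ℝ) / (2 * γ)) * ‖x‖⁻¹) • x

lemma norm_sub_proj_sq_le {d : ℕ} (γ h : ℝ) (hγ : 1 ≤ γ) (hh0 : 0 < h) (hh1 : h ≤ 1)
    (x : EuclideanSpace ℝ (Fin d)) :
    ‖x - proj γ h x‖ ^ 2 ≤ h ^ 2 * ‖x‖ ^ (8 * γ + 2 : ℝ) := by
  have hγ0 : (0 : ℝ) < γ := by linarith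
  set c : ℝ := h ^ (-(1 : ℝ) / (2 * γ)) with hc
  have hcpos : 0 < c := Real.rpow_pos_of_pos hh0 _
  rcases eq_or_ne x 0 with rfl | hx0
  · simp [proj]
    positivity
  have rpos : 0 < ‖x‖ := norm_pos_iff.mpr hx0
  by_cases hx : ‖x‖ ≤ c
  · have h1 : (1 : ℝ) ≤ c * ‖x‖⁻¹ := by
      rw [← div_eq_mul_inv, le_div_iff₀ rpos, one_mul]; exact hx
    have : proj γ h x = x := by rw [proj, min_eq_left h1, one_smul]
    rw [this]
    simp
    positivity
  · push_neg at hx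
    have hmin : min 1 (c * ‖x‖⁻¹) = c * ‖x‖⁻¹ := by
      apply min_eq_right
      rw [← div_eq_mul_inv, div_le_one rpos]
      exact hx.le
    have hnorm : ‖x - proj γ h x‖ ≤ ‖x‖ := by
      rw [proj, hmin]
      have : x - (c * ‖x‖⁻¹) • x = (1 - c * ‖x‖⁻¹) • x := by
        rw [sub_smul, one_smul]
      rw [this, norm_smul, Real.norm_eq_abs]
      have h01 : 0 ≤ 1 - c * ‖x‖⁻¹ := by
        rw [sub_nonneg, ← div_eq_mul_inv, div_le_one rpos]; exact hx.le
      rw [abs_of_nonneg h01]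
      nlinarith [mul_pos hcpos (inv_pos.mpr rpos)]
    have step1 : ‖x - proj γ h x‖ ^ 2 ≤ ‖x‖ ^ 2 :=
      pow_le_pow_left₀ (norm_nonneg _) hnorm 2
    refine step1.trans ?_
    -- `‖x‖ ^ (8γ+2) = ‖x‖ ^ (8γ) * ‖x‖ ^ 2`
    have hsplit : ‖x‖ ^ (8 * γ + 2 : ℝ) = ‖x‖ ^ (8 * γ : ℝ) * ‖x‖ ^ 2 := by
      rw [Real.rpow_add rpos, Real.rpow_two]
    rw [hsplit, ← mul_assoc]
    have hc8 : c ^ (8 * γ : ℝ) = h ^ (-4 : ℝ) := by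
      rw [hc, ← Real.rpow_mul hh0.le]
      congr 1
      field_simp
      ring
    have hle : c ^ (8 * γ : ℝ) ≤ ‖x‖ ^ (8 * γ : ℝ) :=
      Real.rpow_le_rpow hcpos.le hx.le (by positivity)
    have h2 : (1 : ℝ) ≤ h ^ 2 * ‖x‖ ^ (8 * γ : ℝ) := by
      have : (1 : ℝ) ≤ h ^ 2 * h ^ (-4 : ℝ) := by
        have : h ^ 2 * h ^ (-4 : ℝ) = h ^ (-2 : ℝ) := by
          rw [← Real.rpow_two, ← Real.rpow_add hh0]; norm_num
        rw [this]
        exact Real.one_le_rpow_of_pos_of_le_one_of_nonpos hh0 hh1 (by norm_num)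
      calc (1 : ℝ) ≤ h ^ 2 * h ^ (-4 : ℝ) := this
        _ ≤ h ^ 2 * ‖x‖ ^ (8 * γ : ℝ) := by
            rw [← hc8]; exact mul_le_mul_of_nonneg_left hle (by positivity)
    nlinarith [sq_nonneg ‖x‖, norm_nonneg x]

/-- For a random variable `ζ` with finite moment of order `8γ + 2`,
`E[‖ζ - 𝒫(ζ)‖²] ≤ C h² E[‖ζ‖^{8γ+2}]`, where one may take `C = 1`. -/
theorem stmt_18 {d : ℕ} (γ h : ℝ) (hγ : 1 ≤ γ) (hh0 : 0 < h) (hh1 : h ≤ 1)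
    {Ω : Type*} [MeasureSpace Ω] [IsProbabilityMeasure (ℙ : Measure Ω)]
    (ζ : Ω → EuclideanSpace ℝ (Fin d)) (hζ : Measurable ζ)
    (hmom : ∫⁻ ω, (‖ζ ω‖₊ : ENNReal) ^ (8 * γ + 2) ∂ℙ < ⊤) :
    ∫⁻ ω, (‖ζ ω - proj γ h (ζ ω)‖₊ : ENNReal) ^ 2 ∂ℙ ≤
      1 * ENNReal.ofReal (h ^ 2) * (∫⁻ ω, (‖ζ ω‖₊ : ENNReal) ^ (8 * γ + 2) ∂ℙ) := by
  have key : ∀ ω, (‖ζ ω - proj γ h (ζ ω)‖₊ : ENNReal) ^ 2 ≤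
      ENNReal.ofReal (h ^ 2) * (‖ζ ω‖₊ : ENNReal) ^ (8 * γ + 2) := by
    intro ω
    have h1 := norm_sub_proj_sq_le γ h hγ hh0 hh1 (ζ ω)
    calc (‖ζ ω - proj γ h (ζ ω)‖₊ : ENNReal) ^ 2
        = ENNReal.ofReal (‖ζ ω - proj γ h (ζ ω)‖ ^ 2) := by
          rw [← enorm_eq_nnnorm, ← ofReal_norm, ← ENNReal.ofReal_pow (norm_nonneg _)]
      _ ≤ ENNReal.ofReal (h ^ 2 * ‖ζ ω‖ ^ (8 * γ + 2 : ℝ)) :=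
          ENNReal.ofReal_le_ofReal h1
      _ = ENNReal.ofReal (h ^ 2) * (‖ζ ω‖₊ : ENNReal) ^ (8 * γ + 2) := by
          rw [ENNReal.ofReal_mul (by positivity), ← enorm_eq_nnnorm, ← ofReal_norm,
            ENNReal.ofReal_rpow_of_nonneg (norm_nonneg _) (by linarith)]
  calc ∫⁻ ω, (‖ζ ω - proj γ h (ζ ω)‖₊ : ENNReal) ^ 2 ∂ℙ
      ≤ ∫⁻ ω, ENNReal.ofReal (h ^ 2) * (‖ζ ω‖₊ : ENNReal) ^ (8 * γ + 2) ∂ℙ :=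
        lintegral_mono key
    _ = ENNReal.ofReal (h ^ 2) * ∫⁻ ω, (‖ζ ω‖₊ : ENNReal) ^ (8 * γ + 2) ∂ℙ :=
        lintegral_const_mul' _ _ ENNReal.ofReal_ne_top
    _ = 1 * ENNReal.ofReal (h ^ 2) * (∫⁻ ω, (‖ζ ω‖₊ : ENNReal) ^ (8 * γ + 2) ∂ℙ) := by
        rw [one_mul]
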